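/- Fix a real number t, a real σ > 0, and trimming proportions a, b with 0 ≤ a, 0 < b and a + b < 1. For θ ∈ ℝ write γ(θ) = (t − θ)/σ and define c_{y,1}(θ) = (1/(1 − a − b))·∫_a^{1−b} Φ⁻¹(s + (1 − s)·Φ(γ(θ))) ds. Then c_{y,1} is differentiable in θ with derivative c_{y,1}'(θ) = −(φ(γ(θ)) / (σ·(1 − a − b)))·∫_a^{1−b} (1 − s) / φ(Φ⁻¹(s + (1 − s)·Φ(γ(θ)))) ds. -/

import Mathlib

open Real MeasureTheory

/-- Standard normal density `φ(x) = (2π)^(−1/2) exp(−x²/2)`. -/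
noncomputable def stdPDF (x : ℝ) : ℝ := (Real.sqrt (2 * Real.pi))⁻¹ * Real.exp (-x ^ 2 / 2)

/-- Standard normal cumulative distribution function `Φ(x) = ∫_{−∞}^x φ(u) du`. -/
noncomputable def stdCDF (x : ℝ) : ℝ := ∫ u in Set.Iic x, stdPDF u

/-- Mills hazard `h(γ) = φ(γ)/(1 − Φ(γ))`. -/
noncomputable def millsHazard (γ : ℝ) : ℝ := stdPDF γ / (1 - stdCDF γ)

/-- The standard normal quantile function `Φ⁻¹`, the inverse of `Φ`. -/
noncomputable def stdQuantile : ℝ → ℝ := Function.invFun stdCDF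


open Set Filter

lemma stdPDF_pos (x : ℝ) : 0 < stdPDF x := by
  apply mul_pos (inv_pos.2 (Real.sqrt_pos.2 (by positivity))) (Real.exp_pos _)

lemma continuous_stdPDF : Continuous stdPDF := by
  unfold stdPDF; fun_prop

lemma stdPDF_eq (x : ℝ) : stdPDF x = (Real.sqrt (2 * Real.pi))⁻¹ * Real.exp (-(2⁻¹) * x ^ 2) := by
  unfold stdPDF; ring_nf

lemma integrable_stdPDF : Integrable stdPDF := by
  have := (integrable_exp_neg_mul_sq (by norm_num : (0:ℝ) < 2⁻¹)).const_mul
    (Real.sqrt (2 * Real.pi))⁻¹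
  exact this.congr (by filter_upwards with x using (stdPDF_eq x).symm)

lemma integral_stdPDF : ∫ x, stdPDF x = 1 := by
  have h := integral_gaussian 2⁻¹
  rw [funext stdPDF_eq, MeasureTheory.integral_const_mul, h]
  rw [show Real.pi / 2⁻¹ = 2 * Real.pi by ring]
  rw [inv_mul_cancel₀ (by positivity)]

lemma hasDerivAt_stdCDF (x : ℝ) : HasDerivAt stdCDF (stdPDF x) x := by
  have heq : stdCDF = fun y => stdCDF 0 + ∫ u in (0:ℝ)..y, stdPDF u := by
    funext y
    rw [intervalIntegral.integral_Iic_sub_Iic (integrable_stdPDF.integrableOn)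
      (integrable_stdPDF.integrableOn) |>.symm]
    · simp [stdCDF]
  rw [heq]
  have : HasDerivAt (fun y => ∫ u in (0:ℝ)..y, stdPDF u) (stdPDF x) x := by
    apply intervalIntegral.integral_hasDerivAt_right
      integrable_stdPDF.intervalIntegrable
      (continuous_stdPDF.stronglyMeasurableAtFilter _ _)
      continuous_stdPDF.continuousAt
  simpa using this.const_add (stdCDF 0)

lemma strictMono_stdCDF : StrictMono stdCDF := by
  apply strictMono_of_deriv_pos
  intro x
  rw [(hasDerivAt_stdCDF x).deriv]
  exact stdPDF_pos x

lemma continuous_stdCDF : Continuous stdCDF := by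
  have : Differentiable ℝ stdCDF := fun x => (hasDerivAt_stdCDF x).differentiableAt
  exact this.continuous

lemma stdCDF_add_Ioi (x : ℝ) : stdCDF x + ∫ u in Set.Ioi x, stdPDF u = 1 := by
  rw [show stdCDF x = ∫ u in Set.Iic x, stdPDF u from rfl,
    intervalIntegral.integral_Iic_add_Ioi integrable_stdPDF.integrableOn
      integrable_stdPDF.integrableOn, integral_stdPDF]

lemma stdCDF_pos (x : ℝ) : 0 < stdCDF x := by
  have h1 : stdCDF (x - 1) < stdCDF x := strictMono_stdCDF (by linarith)
  have h0 : 0 ≤ stdCDF (x - 1) :=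
    MeasureTheory.setIntegral_nonneg measurableSet_Iic (fun u _ => (stdPDF_pos u).le)
  linarith

lemma stdCDF_lt_one (x : ℝ) : stdCDF x < 1 := by
  have h := stdCDF_add_Ioi x
  have h2 : (0:ℝ) < ∫ u in Set.Ioi x, stdPDF u := by
    have hsub : ∫ u in Set.Ioc x (x+1), stdPDF u ≤ ∫ u in Set.Ioi x, stdPDF u := by
      apply MeasureTheory.setIntegral_mono_set integrable_stdPDF.integrableOn
        (Filter.Eventually.of_forall fun u => (stdPDF_pos u).le)
        (HasSubset.Subset.eventuallyLE Set.Ioc_subset_Ioi_self)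
    have : (0:ℝ) < ∫ u in Set.Ioc x (x+1), stdPDF u := by
      rw [← intervalIntegral.integral_of_le (by linarith : x ≤ x + 1)]
      apply intervalIntegral.intervalIntegral_pos_of_pos_on
        integrable_stdPDF.intervalIntegrable (fun u _ => stdPDF_pos u) (by linarith)
    linarith
  linarith

lemma tendsto_stdCDF_atTop : Tendsto stdCDF atTop (nhds 1) := by
  rw [← integral_stdPDF]
  exact (MeasureTheory.aecover_Iic tendsto_id :
    AECover volume atTop fun x : ℝ => Iic x).integral_tendsto_of_countably_generated
    integrable_stdPDF

lemma tendsto_stdCDF_atBot : Tendsto stdCDF atBot (nhds 0) := by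
  have h : Tendsto (fun x : ℝ => ∫ u in Set.Ioi x, stdPDF u) atBot (nhds 1) := by
    rw [← integral_stdPDF]
    exact (MeasureTheory.aecover_Ioi tendsto_id :
      AECover volume atBot fun x : ℝ => Ioi x).integral_tendsto_of_countably_generated
      integrable_stdPDF
  have : stdCDF = fun x => 1 - ∫ u in Set.Ioi x, stdPDF u := by
    funext x; have := stdCDF_add_Ioi x; linarith
  rw [this]
  simpa using (tendsto_const_nhds (x := (1:ℝ))).sub h

lemma stdCDF_surjOn {p : ℝ} (hp : p ∈ Set.Ioo (0:ℝ) 1) : ∃ x, stdCDF x = p := by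
  apply intermediate_value_univ₂_eventually₂ (l₁ := atBot) (l₂ := atTop)
    continuous_stdCDF continuous_const
  · exact (tendsto_stdCDF_atBot.eventually_lt_const hp.1).mono fun x hx => hx.le
  · exact (tendsto_stdCDF_atTop.eventually_const_lt hp.2).mono fun x hx => hx.le

lemma stdQuantile_stdCDF (x : ℝ) : stdQuantile (stdCDF x) = x :=
  Function.leftInverse_invFun strictMono_stdCDF.injective x

lemma stdCDF_stdQuantile {p : ℝ} (hp : p ∈ Set.Ioo (0:ℝ) 1) : stdCDF (stdQuantile p) = p :=
  Function.invFun_eq (stdCDF_surjOn hp)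

lemma strictMonoOn_stdQuantile : StrictMonoOn stdQuantile (Set.Ioo 0 1) := by
  intro p hp q hq hpq
  have := stdCDF_stdQuantile hp
  have := stdCDF_stdQuantile hq
  by_contra h
  have : stdCDF (stdQuantile q) ≤ stdCDF (stdQuantile p) :=
    strictMono_stdCDF.monotone (not_lt.1 h)
  simp_all; linarith

lemma continuousAt_stdQuantile {p : ℝ} (hp : p ∈ Set.Ioo (0:ℝ) 1) :
    ContinuousAt stdQuantile p := by
  apply strictMonoOn_stdQuantile.continuousAt_of_image_mem_nhds
    (Ioo_mem_nhds hp.1 hp.2)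
  have : stdQuantile '' Set.Ioo 0 1 = Set.univ := by
    apply Set.eq_univ_of_forall
    intro x
    exact ⟨stdCDF x, ⟨stdCDF_pos x, stdCDF_lt_one x⟩, stdQuantile_stdCDF x⟩
  rw [this]; exact Filter.univ_mem

lemma hasDerivAt_stdQuantile {p : ℝ} (hp : p ∈ Set.Ioo (0:ℝ) 1) :
    HasDerivAt stdQuantile (stdPDF (stdQuantile p))⁻¹ p := by
  apply HasDerivAt.of_local_left_inverse (continuousAt_stdQuantile hp)
    (hasDerivAt_stdCDF _) (stdPDF_pos _).ne'
  filter_upwards [Ioo_mem_nhds hp.1 hp.2] with q hq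
  exact stdCDF_stdQuantile hq

lemma hasDerivAt_stdPDF (x : ℝ) : HasDerivAt stdPDF (-x * stdPDF x) x := by
  have h1 : HasDerivAt (fun x : ℝ => -x ^ 2 / 2) (-x) x := by
    have := ((hasDerivAt_pow 2 x).neg.div_const 2)
    refine this.congr_deriv ?_; ring
  have := (h1.exp).const_mul (Real.sqrt (2 * Real.pi))⁻¹
  refine this.congr_deriv ?_; unfold stdPDF; ring

lemma mem_Ioo_aux {a b c s : ℝ} (ha : 0 ≤ a) (hb : 0 < b) (hab : a + b < 1)
    (hc : c ∈ Set.Ioo (0:ℝ) 1) (hs : s ∈ Set.Icc a (1 - b)) :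
    s + (1 - s) * c ∈ Set.Ioo (0:ℝ) 1 := by
  obtain ⟨hc0, hc1⟩ := hc
  obtain ⟨hs1, hs2⟩ := hs
  constructor <;> nlinarith

lemma integralA {a b c : ℝ} (ha : 0 ≤ a) (hb : 0 < b) (hab : a + b < 1)
    (hc : c ∈ Set.Ioo (0:ℝ) 1) :
    ∫ s in a..(1 - b), stdQuantile (s + (1 - s) * c)
      = (1 - c)⁻¹ * (stdPDF (stdQuantile (a + (1 - a) * c))
          - stdPDF (stdQuantile ((1 - b) + b * c))) := by
  have hab' : a ≤ 1 - b := by linarith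
  have huIcc : Set.uIcc a (1 - b) = Set.Icc a (1 - b) := Set.uIcc_of_le hab'
  have hc1 : (1:ℝ) - c ≠ 0 := by have := hc.2; intro h; linarith [sub_eq_zero.1 h]
  have hmem : ∀ s ∈ Set.Icc a (1 - b), s + (1 - s) * c ∈ Set.Ioo (0:ℝ) 1 :=
    fun s hs => mem_Ioo_aux ha hb hab hc hs
  have hcont : ContinuousOn (fun s => stdQuantile (s + (1 - s) * c)) (Set.Icc a (1 - b)) := by
    intro s hs
    have hQ : ContinuousAt (fun s : ℝ => stdQuantile (s + (1 - s) * c)) s :=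
      ContinuousAt.comp (x := s) (g := stdQuantile) (continuousAt_stdQuantile (hmem s hs))
        (by fun_prop)
    exact hQ.continuousWithinAt
  have key : ∀ s ∈ Set.uIcc a (1 - b),
      HasDerivAt (fun s => -(1 - c)⁻¹ * stdPDF (stdQuantile (s + (1 - s) * c)))
        (stdQuantile (s + (1 - s) * c)) s := by
    intro s hs
    rw [huIcc] at hs
    have hm := hmem s hs
    have hp : HasDerivAt (fun s : ℝ => s + (1 - s) * c) (1 + -1 * c) s :=
      (hasDerivAt_id s).add (((hasDerivAt_id s).const_sub 1).mul_const c)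
    have hq := (hasDerivAt_stdQuantile hm).comp s hp
    have hpdf := (hasDerivAt_stdPDF (stdQuantile (s + (1 - s) * c))).comp s hq
    have := hpdf.const_mul (-(1 - c)⁻¹)
    refine this.congr_deriv ?_
    have hP := (stdPDF_pos (stdQuantile (s + (1 - s) * c))).ne'
    generalize stdPDF (stdQuantile (s + (1 - s) * c)) = P at hP ⊢
    field_simp
    ring
  rw [intervalIntegral.integral_eq_sub_of_hasDerivAt key
    ((hcont.mono (by rw [huIcc])).intervalIntegrable)]
  ring

lemma integralB {a b c : ℝ} (ha : 0 ≤ a) (hb : 0 < b) (hab : a + b < 1)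
    (hc : c ∈ Set.Ioo (0:ℝ) 1) :
    ∫ s in a..(1 - b), (1 - s) / stdPDF (stdQuantile (s + (1 - s) * c))
      = (1 - c)⁻¹ * (1 - c)⁻¹ *
        (((1 - ((1 - b) + b * c)) * stdQuantile ((1 - b) + b * c)
            - stdPDF (stdQuantile ((1 - b) + b * c)))
          - ((1 - (a + (1 - a) * c)) * stdQuantile (a + (1 - a) * c)
            - stdPDF (stdQuantile (a + (1 - a) * c)))) := by
  have hab' : a ≤ 1 - b := by linarith
  have huIcc : Set.uIcc a (1 - b) = Set.Icc a (1 - b) := Set.uIcc_of_le hab'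
  have hc1 : (1:ℝ) - c ≠ 0 := by have := hc.2; intro h; linarith [sub_eq_zero.1 h]
  have hmem : ∀ s ∈ Set.Icc a (1 - b), s + (1 - s) * c ∈ Set.Ioo (0:ℝ) 1 :=
    fun s hs => mem_Ioo_aux ha hb hab hc hs
  have hcont : ContinuousOn (fun s => (1 - s) / stdPDF (stdQuantile (s + (1 - s) * c)))
      (Set.Icc a (1 - b)) := by
    intro s hs
    have hQ : ContinuousAt (fun s : ℝ => stdQuantile (s + (1 - s) * c)) s :=
      ContinuousAt.comp (x := s) (g := stdQuantile) (continuousAt_stdQuantile (hmem s hs))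
        (by fun_prop)
    exact (((continuousAt_const.sub continuousAt_id).div
      ((continuous_stdPDF.continuousAt).comp hQ)
      (stdPDF_pos _).ne')).continuousWithinAt
  have key : ∀ s ∈ Set.uIcc a (1 - b),
      HasDerivAt (fun s => (1 - c)⁻¹ * (1 - c)⁻¹ *
          ((1 - (s + (1 - s) * c)) * stdQuantile (s + (1 - s) * c)
            - stdPDF (stdQuantile (s + (1 - s) * c))))
        ((1 - s) / stdPDF (stdQuantile (s + (1 - s) * c))) s := by
    intro s hs
    rw [huIcc] at hs
    have hm := hmem s hs
    have hp : HasDerivAt (fun s : ℝ => s + (1 - s) * c) (1 + -1 * c) s :=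
      (hasDerivAt_id s).add (((hasDerivAt_id s).const_sub 1).mul_const c)
    have hq := (hasDerivAt_stdQuantile hm).comp s hp
    have hpdf := (hasDerivAt_stdPDF (stdQuantile (s + (1 - s) * c))).comp s hq
    have hterm1 := (hp.const_sub 1).mul hq
    have := (hterm1.sub hpdf).const_mul ((1 - c)⁻¹ * (1 - c)⁻¹)
    refine this.congr_deriv ?_
    have hP := (stdPDF_pos (stdQuantile (s + (1 - s) * c))).ne'
    simp only [Function.comp_apply, Pi.inv_apply, Pi.sub_apply, Pi.mul_apply]
    generalize stdPDF (stdQuantile (s + (1 - s) * c)) = P at hP ⊢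
    field_simp
    ring
  rw [intervalIntegral.integral_eq_sub_of_hasDerivAt key
    ((hcont.mono (by rw [huIcc])).intervalIntegrable)]
  ring_nf

/-- Differentiability of `c_{y,1}(θ)` with the stated derivative. -/
theorem cY1_hasDerivAt (t σ a b : ℝ) (hσ : 0 < σ) (ha : 0 ≤ a) (hb : 0 < b)
    (hab : a + b < 1) (θ : ℝ) :
    HasDerivAt
      (fun θ' : ℝ => (1 - a - b)⁻¹ *
        ∫ s in a..(1 - b), stdQuantile (s + (1 - s) * stdCDF ((t - θ') / σ)))
      (-(stdPDF ((t - θ) / σ) / (σ * (1 - a - b))) *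
        ∫ s in a..(1 - b),
          (1 - s) / stdPDF (stdQuantile (s + (1 - s) * stdCDF ((t - θ) / σ))))
      θ := by
  have hcIoo : ∀ θ' : ℝ, stdCDF ((t - θ') / σ) ∈ Set.Ioo (0:ℝ) 1 :=
    fun θ' => ⟨stdCDF_pos _, stdCDF_lt_one _⟩
  have hF : (fun θ' : ℝ => (1 - a - b)⁻¹ *
        ∫ s in a..(1 - b), stdQuantile (s + (1 - s) * stdCDF ((t - θ') / σ)))
      = fun θ' : ℝ => (1 - a - b)⁻¹ *
          ((1 - stdCDF ((t - θ') / σ))⁻¹ *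
            (stdPDF (stdQuantile (a + (1 - a) * stdCDF ((t - θ') / σ)))
              - stdPDF (stdQuantile ((1 - b) + b * stdCDF ((t - θ') / σ))))) := by
    funext θ'
    rw [integralA ha hb hab (hcIoo θ')]
  rw [hF, integralB ha hb hab (hcIoo θ)]
  -- abbreviations
  set c := stdCDF ((t - θ) / σ) with hcdef
  have hcI := hcIoo θ
  have hc1 : (1:ℝ) - c ≠ 0 := by have := hcI.2; intro h; nlinarith [sub_eq_zero.1 h]
  have hpaI : a + (1 - a) * c ∈ Set.Ioo (0:ℝ) 1 := by
    constructor <;> nlinarith [hcI.1, hcI.2]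
  have hpbI : (1 - b) + b * c ∈ Set.Ioo (0:ℝ) 1 := by
    constructor <;> nlinarith [hcI.1, hcI.2]
  -- derivative of c
  have hinner : HasDerivAt (fun θ' : ℝ => (t - θ') / σ) (-1 / σ) θ := by
    simpa using ((hasDerivAt_id θ).const_sub t).div_const σ
  have hc : HasDerivAt (fun θ' : ℝ => stdCDF ((t - θ') / σ)) (stdPDF ((t - θ) / σ) * (-1 / σ)) θ :=
    HasDerivAt.comp (h₂ := stdCDF) θ (hasDerivAt_stdCDF ((t - θ) / σ)) hinner
  set g := stdPDF ((t - θ) / σ) with hgdef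
  -- branch 1
  have h1 : HasDerivAt (fun θ' : ℝ => a + (1 - a) * stdCDF ((t - θ') / σ))
      ((1 - a) * (g * (-1 / σ))) θ := (hc.const_mul (1 - a)).const_add a
  have hq1 := (hasDerivAt_stdQuantile hpaI).comp θ h1
  have hpdf1 := (hasDerivAt_stdPDF (stdQuantile (a + (1 - a) * c))).comp θ hq1
  -- branch 2
  have h2 : HasDerivAt (fun θ' : ℝ => (1 - b) + b * stdCDF ((t - θ') / σ))
      (b * (g * (-1 / σ))) θ := (hc.const_mul b).const_add (1 - b)
  have hq2 := (hasDerivAt_stdQuantile hpbI).comp θ h2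
  have hpdf2 := (hasDerivAt_stdPDF (stdQuantile ((1 - b) + b * c))).comp θ hq2
  -- inverse factor
  have hinv := (hc.const_sub 1).inv hc1
  have hG := ((hinv.mul (hpdf1.sub hpdf2)).const_mul (1 - a - b)⁻¹)
  refine hG.congr_deriv ?_
  have hPa := (stdPDF_pos (stdQuantile (a + (1 - a) * c))).ne'
  have hPb := (stdPDF_pos (stdQuantile ((1 - b) + b * c))).ne'
  have habne : (1:ℝ) - a - b ≠ 0 := by intro h; nlinarith
  simp only [Function.comp_apply, Pi.inv_apply, Pi.sub_apply, Pi.mul_apply]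
  rw [← hcdef]
  generalize stdPDF (stdQuantile (a + (1 - a) * c)) = Pa at hPa ⊢
  generalize stdPDF (stdQuantile ((1 - b) + b * c)) = Pb at hPb ⊢
  field_simp
  ring
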